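/- Let R = ℤ[x] and I = ⟨2x⟩. Then 1·x and 3·x are both I-pre-images of the class of x in ℤ[x]/⟨2x⟩ (with relative prime parts 1 and 3), the class of 1 is invertible in ℤ[x]/⟨2x⟩, but the class of 3 is not invertible in ℤ[x]/⟨2x⟩. -/

import Mathlib

open Polynomial

lemma aux_dvd (d : Polynomial ℤ) (h3 : d ∣ (3 : Polynomial ℤ))
    (h2 : d ∣ (2 * Polynomial.X : Polynomial ℤ)) : IsUnit d := by
  have hdeg : d.natDegree = 0 := by
    have := Polynomial.natDegree_le_of_dvd h3 (by norm_num)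
    simpa [Polynomial.natDegree_ofNat] using this
  obtain ⟨c, rfl⟩ : ∃ c : ℤ, d = Polynomial.C c :=
    ⟨d.coeff 0, (Polynomial.eq_C_of_natDegree_eq_zero hdeg)⟩
  have h3' : c ∣ 3 := by
    have := (Polynomial.C_dvd_iff_dvd_coeff c 3).mp h3 0
    simpa using this
  have h2' : c ∣ 2 := by
    have := (Polynomial.C_dvd_iff_dvd_coeff c (2 * Polynomial.X)).mp h2 1
    simpa [Polynomial.coeff_mul_X] using this
  have hc1 : c ∣ 1 := by
    have := dvd_sub h3' h2'
    norm_num at this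
    exact this
  exact Polynomial.isUnit_C.mpr (isUnit_of_dvd_one hc1)

theorem stmt13 :
    (Ideal.Quotient.mk (Ideal.span {(2 * Polynomial.X : Polynomial ℤ)})
        ((1 : Polynomial ℤ) * Polynomial.X) =
        Ideal.Quotient.mk (Ideal.span {(2 * Polynomial.X : Polynomial ℤ)}) Polynomial.X ∧
      (∀ d : Polynomial ℤ, d ∣ (1 : Polynomial ℤ) →
        d ∣ (2 * Polynomial.X : Polynomial ℤ) → IsUnit d) ∧
      (Polynomial.X : Polynomial ℤ) ∣ 2 * Polynomial.X) ∧
    (Ideal.Quotient.mk (Ideal.span {(2 * Polynomial.X : Polynomial ℤ)})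
        ((3 : Polynomial ℤ) * Polynomial.X) =
        Ideal.Quotient.mk (Ideal.span {(2 * Polynomial.X : Polynomial ℤ)}) Polynomial.X ∧
      (∀ d : Polynomial ℤ, d ∣ (3 : Polynomial ℤ) →
        d ∣ (2 * Polynomial.X : Polynomial ℤ) → IsUnit d) ∧
      (Polynomial.X : Polynomial ℤ) ∣ 2 * Polynomial.X) ∧
    IsUnit (Ideal.Quotient.mk (Ideal.span {(2 * Polynomial.X : Polynomial ℤ)})
      (1 : Polynomial ℤ)) ∧
    ¬ IsUnit (Ideal.Quotient.mk (Ideal.span {(2 * Polynomial.X : Polynomial ℤ)})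
      (3 : Polynomial ℤ)) := by
  refine ⟨⟨by ring_nf, fun d h1 _ => isUnit_of_dvd_one h1, ⟨2, by ring⟩⟩,
    ⟨?_, aux_dvd, ⟨2, by ring⟩⟩, ⟨1, by simp⟩, ?_⟩
  · rw [Ideal.Quotient.eq]
    refine Ideal.mem_span_singleton.mpr ⟨1, by ring⟩
  · intro h
    have hker : Ideal.span {(2 * Polynomial.X : Polynomial ℤ)} ≤
        RingHom.ker (Polynomial.evalRingHom (0 : ℤ)) := by
      rw [Ideal.span_le]
      intro p hp
      simp only [Set.mem_singleton_iff] at hp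
      subst hp
      simp [RingHom.mem_ker]
    have h' := h.map (Ideal.Quotient.lift _ (Polynomial.evalRingHom (0 : ℤ)) hker)
    change IsUnit (Polynomial.evalRingHom (0 : ℤ) 3) at h'
    norm_num [Int.isUnit_iff] at h'
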